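/- If there are at least three attributes (k ≥ 3) and all attributes are binary (C i = 2 for all i), then there exists an attribute hiding scheme that is not tree-structured. Concretely, let b_j (for j : Fin k) be the natural bundle with (b_j) j = none, (b_j) ((j + 1) mod k) = some 1, and (b_j) i = some 0 otherwise; then the scheme {b_0, …, b_{k−1}} is not equivalent to any tree-structured scheme, i.e., no tree-structured scheme has {b_0, …, b_{k−1}} as its set of non-unit bundles. -/

import Mathlib

/-- A natural bundle over `k` binary attributes: each attribute either takes a specific
value (`some a`) or is hidden (`none`). -/
abbrev Bund (k : ℕ) := Fin k → Option (Fin 2)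

/-- The set of instantiations belonging to a natural bundle. -/
def members {k : ℕ} (b : Bund k) : Finset (Fin k → Fin 2) :=
  Finset.univ.filter fun ω => ∀ i, b i = none ∨ b i = some (ω i)

/-- An attribute hiding scheme: a finite set of natural bundles with pairwise disjoint
member sets. -/
def IsScheme {k : ℕ} (O : Finset (Bund k)) : Prop :=
  ∀ b ∈ O, ∀ b' ∈ O, b ≠ b' → Disjoint (members b) (members b')

/-- `splitB b x` : the bundles obtained from `b` by revealing the hidden attribute `x`. -/
def splitB {k : ℕ} (b : Bund k) (x : Fin k) : Finset (Bund k) :=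
  Finset.univ.image fun j : Fin 2 => Function.update b x (some j)

/-- Tree-structured schemes: obtained from `{⊤}` (all attributes hidden) by recursively
splitting a bundle along one of its hidden attributes. -/
inductive IsTree (k : ℕ) : Finset (Bund k) → Prop
  | top : IsTree k {(fun _ => none : Bund k)}
  | split (O : Finset (Bund k)) (b : Bund k) (x : Fin k) :
      IsTree k O → b ∈ O → b x = none → IsTree k ((O.erase b) ∪ splitB b x)

/-- The bundle `b_j`: attribute `j` is hidden, attribute `(j + 1) mod k` equals `1`, and
every other attribute equals `0`. -/
def B {k : ℕ} (j : Fin k) : Bund k := fun i =>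
  if i = j then none else if (i : ℕ) = ((j : ℕ) + 1) % k then some 1 else some 0

lemma succmod_inj {k a b : ℕ} (ha : a < k) (hb : b < k)
    (h : (a + 1) % k = (b + 1) % k) : a = b := by
  rcases Nat.lt_or_ge (a + 1) k with h1 | h1 <;>
    rcases Nat.lt_or_ge (b + 1) k with h2 | h2
  · rw [Nat.mod_eq_of_lt h1, Nat.mod_eq_of_lt h2] at h; omega
  · have hb1 : b + 1 = k := by omega
    rw [Nat.mod_eq_of_lt h1, hb1, Nat.mod_self] at h; omega
  · have ha1 : a + 1 = k := by omega
    rw [Nat.mod_eq_of_lt h2, ha1, Nat.mod_self] at h; omega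
  · omega

lemma tree_inv {k : ℕ} (T : Finset (Bund k)) (h : IsTree k T) :
    T = {(fun _ => none : Bund k)} ∨ ∃ x, ∀ b ∈ T, b x ≠ none := by
  induction h with
  | top => left; rfl
  | split O b x hO hb hbx ih =>
    right
    have hsplit : ∀ c ∈ splitB b x, c x ≠ none := by
      intro c hc
      simp only [splitB, Finset.mem_image, Finset.mem_univ, true_and] at hc
      obtain ⟨j, rfl⟩ := hc
      simp [Function.update_self]
    rcases ih with rfl | ⟨x', hx'⟩
    · refine ⟨x, fun c hc => ?_⟩
      rcases Finset.mem_union.1 hc with hc | hc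
      · have hb' : b = (fun _ => none : Bund k) := Finset.mem_singleton.1 hb
        subst hb'
        simp at hc
      · exact hsplit c hc
    · refine ⟨x', fun c hc => ?_⟩
      rcases Finset.mem_union.1 hc with hc | hc
      · exact hx' c (Finset.mem_of_mem_erase hc)
      · simp only [splitB, Finset.mem_image, Finset.mem_univ, true_and] at hc
        obtain ⟨j, rfl⟩ := hc
        rw [Function.update_apply]
        split
        · simp
        · exact hx' b hb

/-- For `k ≥ 3` binary attributes, `{b_0, …, b_{k-1}}` is an attribute hiding scheme
that is not equivalent to any tree-structured scheme: no tree-structured scheme has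
`{b_0, …, b_{k-1}}` as its set of non-unit bundles. -/
theorem stmt10 (k : ℕ) (hk : 3 ≤ k) :
    IsScheme (Finset.univ.image (B (k := k))) ∧
    ∀ T : Finset (Bund k), IsTree k T →
      T.filter (fun b => ∃ i, b i = none) ≠
        (Finset.univ.image (B (k := k))).filter (fun b => ∃ i, b i = none) := by
  have hk0 : 0 < k := by omega
  -- B j i = some value for i ≠ j
  have hBval : ∀ j i : Fin k, i ≠ j →
      B j i = some (if (i : ℕ) = ((j : ℕ) + 1) % k then 1 else 0) := by
    intro j i hij
    simp only [B, if_neg hij]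
    split <;> rfl
  have hBnone : ∀ j : Fin k, B j j = none := by
    intro j; simp [B]
  have succ_ne : ∀ j : Fin k, (((j : ℕ) + 1) % k : ℕ) ≠ (j : ℕ) := by
    intro j
    rcases Nat.lt_or_ge ((j : ℕ) + 1) k with h | h
    · rw [Nat.mod_eq_of_lt h]; omega
    · have : (j : ℕ) = k - 1 := by have := j.isLt; omega
      have hk1 : ((j : ℕ) + 1) % k = 0 := by
        rw [this]; have : k - 1 + 1 = k := by omega
        rw [this, Nat.mod_self]
      rw [hk1, this]; omega
  constructor
  · -- scheme
    intro b hb b' hb' hne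
    simp only [Finset.mem_image, Finset.mem_univ, true_and] at hb hb'
    obtain ⟨j, rfl⟩ := hb
    obtain ⟨j', rfl⟩ := hb'
    have hjj' : j ≠ j' := fun h => hne (by rw [h])
    rw [Finset.disjoint_left]
    intro ω hω hω'
    simp only [members, Finset.mem_filter, Finset.mem_univ, true_and] at hω hω'
    -- derive values of ω
    have hval : ∀ i : Fin k, i ≠ j → ω i = if (i : ℕ) = ((j : ℕ) + 1) % k then 1 else 0 := by
      intro i hij
      rcases hω i with h | h
      · rw [hBval j i hij] at h; exact absurd h (by simp)
      · rw [hBval j i hij] at h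
        exact (Option.some_inj.mp h).symm
    have hval' : ∀ i : Fin k, i ≠ j' → ω i = if (i : ℕ) = ((j' : ℕ) + 1) % k then 1 else 0 := by
      intro i hij
      rcases hω' i with h | h
      · rw [hBval j' i hij] at h; exact absurd h (by simp)
      · rw [hBval j' i hij] at h
        exact (Option.some_inj.mp h).symm
    -- succ values as Fin k
    set s := (⟨((j : ℕ) + 1) % k, Nat.mod_lt _ hk0⟩ : Fin k) with hs
    set s' := (⟨((j' : ℕ) + 1) % k, Nat.mod_lt _ hk0⟩ : Fin k) with hs'
    have hss' : s ≠ s' := by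
      intro h
      apply hjj'
      have h2 : ((j : ℕ) + 1) % k = ((j' : ℕ) + 1) % k := by
        simpa [hs, hs', Fin.ext_iff] using h
      exact Fin.ext (succmod_inj j.isLt j'.isLt h2)
    have hsj : s ≠ j := by
      simp [hs, Fin.ext_iff]; exact succ_ne j
    have hs'j' : s' ≠ j' := by
      simp [hs', Fin.ext_iff]; exact succ_ne j'
    -- case: s ≠ j'
    by_cases hcase : s = j'
    · -- then s' ≠ j (else 2 = 0 mod k)
      have hs'j : s' ≠ j := by
        intro h
        have e1 : ((j : ℕ) + 1) % k = (j' : ℕ) := by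
          simpa [hs, Fin.ext_iff] using hcase
        have e2 : ((j' : ℕ) + 1) % k = (j : ℕ) := by
          simpa [hs', Fin.ext_iff] using h
        have := j.isLt; have := j'.isLt
        -- (j+1)%k = j', (j'+1)%k = j → contradiction with k ≥ 3
        rcases Nat.lt_or_ge ((j : ℕ) + 1) k with h1 | h1
        · rw [Nat.mod_eq_of_lt h1] at e1
          rcases Nat.lt_or_ge ((j' : ℕ) + 1) k with h2 | h2
          · rw [Nat.mod_eq_of_lt h2] at e2; omega
          · have : (j' : ℕ) = k - 1 := by omega
            rw [this] at e2
            have hkk : k - 1 + 1 = k := by omega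
            rw [hkk, Nat.mod_self] at e2
            omega
        · have : (j : ℕ) = k - 1 := by omega
          rw [this] at e1
          have hkk : k - 1 + 1 = k := by omega
          rw [hkk, Nat.mod_self] at e1
          rcases Nat.lt_or_ge ((j' : ℕ) + 1) k with h2 | h2
          · rw [Nat.mod_eq_of_lt h2] at e2; omega
          · have hj' : (j' : ℕ) = k - 1 := by omega
            omega
      -- use i = s'
      have v1 := hval s' hs'j
      have v2 := hval' s' hs'j'
      rw [if_pos (by simp [hs'])] at v2
      have hne2 : ((s' : ℕ) ≠ ((j : ℕ) + 1) % k) := by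
        intro h
        apply hss'
        apply Fin.ext
        simp [hs, hs'] at h ⊢
        omega
      rw [if_neg hne2] at v1
      rw [v1] at v2
      exact absurd v2 (by decide)
    · -- use i = s
      have v1 := hval s hsj
      have v2 := hval' s hcase
      rw [if_pos (by simp [hs])] at v1
      have hne2 : ((s : ℕ) ≠ ((j' : ℕ) + 1) % k) := by
        intro h
        apply hss'
        apply Fin.ext
        simp [hs, hs'] at h ⊢
        omega
      rw [if_neg hne2] at v2
      rw [v1] at v2
      exact absurd v2 (by decide)
  · -- not tree
    intro T hT heq
    have hBin : ∀ j : Fin k, B j ∈ T := by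
      intro j
      have : B j ∈ (Finset.univ.image (B (k := k))).filter (fun b => ∃ i, b i = none) := by
        refine Finset.mem_filter.2 ⟨Finset.mem_image_of_mem _ (Finset.mem_univ j), ⟨j, hBnone j⟩⟩
      rw [← heq] at this
      exact (Finset.mem_filter.1 this).1
    rcases tree_inv T hT with rfl | ⟨x, hx⟩
    · -- T = {⊤}, then B ⟨0⟩ = ⊤, contradiction
      have h0 := hBin ⟨0, hk0⟩
      have hb : B (⟨0, hk0⟩ : Fin k) = (fun _ => none : Bund k) :=
        Finset.mem_singleton.1 h0
      have := congrFun hb ⟨1, by omega⟩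
      rw [hBval ⟨0, hk0⟩ ⟨1, by omega⟩ (by simp [Fin.ext_iff])] at this
      exact Option.some_ne_none _ this
    · exact hx (B x) (hBin x) (hBnone x)
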